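/- Suppose (W, W') ∈ ℝ^k × ℝ^k is an exchangeable pair satisfying E(W'|W) = (I_k − Λ)W for an invertible matrix Λ, ‖W − W'‖₂ ≤ K, and E(e^{θᵗW}) < ∞ for all θ. Then for every w ∈ ℝ^k with all coordinates nonnegative, P(W ⪰ w) ≤ exp(−‖w‖₂² / (2K²ν₁)) and P(W ⪯ −w) ≤ exp(−‖w‖₂² / (2K²ν₁)), where ν₁ = 1/σ₁(Λ) and ⪰ denotes coordinatewise ≥. -/

import Mathlib

open MeasureTheory ProbabilityTheory Real Matrix

/-- The Euclidean (ℓ²) norm on `Fin k → ℝ`. -/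
noncomputable def norm2 {k : ℕ} (x : Fin k → ℝ) : ℝ := Real.sqrt (∑ i, x i ^ 2)

/-- The smallest singular value of a square real matrix: the infimum of `‖Λx‖₂`
over unit vectors `x`. -/
noncomputable def smallestSingularValue {k : ℕ} (Λ : Matrix (Fin k) (Fin k) ℝ) : ℝ :=
  sInf {r | ∃ x : Fin k → ℝ, norm2 x = 1 ∧ r = norm2 (Λ.mulVec x)}


lemma norm2_nonneg {k : ℕ} (x : Fin k → ℝ) : 0 ≤ norm2 x := Real.sqrt_nonneg _

lemma norm2_sq {k : ℕ} (x : Fin k → ℝ) : norm2 x ^ 2 = x ⬝ᵥ x := by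
  rw [norm2, Real.sq_sqrt (Finset.sum_nonneg fun i _ => sq_nonneg _)]
  simp [dotProduct, sq]

lemma norm2_eq_norm {k : ℕ} (x : Fin k → ℝ) :
    norm2 x = ‖(WithLp.equiv 2 (Fin k → ℝ)).symm x‖ := by
  rw [EuclideanSpace.norm_eq]
  simp [norm2, sq_abs]

lemma abs_dotProduct_le {k : ℕ} (x y : Fin k → ℝ) : |x ⬝ᵥ y| ≤ norm2 x * norm2 y := by
  have h := abs_real_inner_le_norm ((WithLp.equiv 2 (Fin k → ℝ)).symm x)
      ((WithLp.equiv 2 (Fin k → ℝ)).symm y)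
  rw [← norm2_eq_norm, ← norm2_eq_norm] at h
  have e : (inner ℝ ((WithLp.equiv 2 (Fin k → ℝ)).symm x) ((WithLp.equiv 2 (Fin k → ℝ)).symm y) : ℝ) = x ⬝ᵥ y := by
    simp [PiLp.inner_apply, dotProduct, RCLike.inner_apply, mul_comm]
  rwa [e] at h

lemma norm2_eq_zero {k : ℕ} {x : Fin k → ℝ} (h : norm2 x = 0) : x = 0 := by
  rw [norm2_eq_norm] at h
  have := norm_eq_zero.mp h
  ext i
  exact congrFun (congrArg (WithLp.equiv 2 (Fin k → ℝ)) this) i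

lemma norm2_smul {k : ℕ} (c : ℝ) (x : Fin k → ℝ) : norm2 (c • x) = |c| * norm2 x := by
  rw [norm2_eq_norm, norm2_eq_norm]
  have : (WithLp.equiv 2 (Fin k → ℝ)).symm (c • x) = c • (WithLp.equiv 2 (Fin k → ℝ)).symm x := by
    rfl
  rw [this, norm_smul]
  simp [Real.norm_eq_abs]

lemma abs_coord_le_norm2 {k : ℕ} (x : Fin k → ℝ) (i : Fin k) : |x i| ≤ norm2 x := by
  rw [norm2, ← Real.sqrt_sq_eq_abs]
  apply Real.sqrt_le_sqrt
  exact Finset.single_le_sum (f := fun j => x j ^ 2) (fun j _ => sq_nonneg _) (Finset.mem_univ i)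

section ssv
variable {k : ℕ} (Λ : Matrix (Fin k) (Fin k) ℝ)

lemma ssv_bddBelow : BddBelow {r | ∃ x : Fin k → ℝ, norm2 x = 1 ∧ r = norm2 (Λ.mulVec x)} :=
  ⟨0, fun r ⟨x, _, hr⟩ => hr ▸ norm2_nonneg _⟩

lemma ssv_le {x : Fin k → ℝ} (hx : norm2 x = 1) :
    smallestSingularValue Λ ≤ norm2 (Λ.mulVec x) :=
  csInf_le (ssv_bddBelow Λ) ⟨x, hx, rfl⟩

lemma ssv_mul_le (x : Fin k → ℝ) :
    smallestSingularValue Λ * norm2 x ≤ norm2 (Λ.mulVec x) := by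
  rcases eq_or_ne (norm2 x) 0 with h | h
  · rw [h, mul_zero, norm2_eq_zero h]
    simp [Matrix.mulVec_zero, norm2_nonneg]
  · have hpos : 0 < norm2 x := lt_of_le_of_ne (norm2_nonneg x) (Ne.symm h)
    have hx1 : norm2 ((norm2 x)⁻¹ • x) = 1 := by
      rw [norm2_smul, abs_of_pos (by positivity), inv_mul_cancel₀ h]
    have := ssv_le Λ hx1
    rw [Matrix.mulVec_smul, norm2_smul, abs_of_pos (by positivity)] at this
    calc smallestSingularValue Λ * norm2 x ≤ (norm2 x)⁻¹ * norm2 (Λ.mulVec x) * norm2 x := by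
          exact mul_le_mul_of_nonneg_right this hpos.le
      _ = norm2 (Λ.mulVec x) := by field_simp

lemma ssv_transpose_mul_le (hΛ : IsUnit Λ.det) (y : Fin k → ℝ) :
    smallestSingularValue Λ * norm2 y ≤ norm2 (Λᵀ.mulVec y) := by
  rcases eq_or_ne (norm2 y) 0 with h | h
  · rw [h, mul_zero]; exact norm2_nonneg _
  have hypos : 0 < norm2 y := lt_of_le_of_ne (norm2_nonneg y) (Ne.symm h)
  set σ := smallestSingularValue Λ
  have key : y ⬝ᵥ y = (Λᵀ.mulVec y) ⬝ᵥ (Λ⁻¹.mulVec y) := by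
    rw [Matrix.mulVec_transpose, ← Matrix.dotProduct_mulVec, Matrix.mulVec_mulVec,
      Matrix.mul_nonsing_inv Λ hΛ, Matrix.one_mulVec]
  rcases le_or_gt σ 0 with hσ | hσ
  · calc σ * norm2 y ≤ 0 := mul_nonpos_of_nonpos_of_nonneg hσ (norm2_nonneg _)
      _ ≤ _ := norm2_nonneg _
  have h1 : norm2 y ^ 2 ≤ norm2 (Λᵀ.mulVec y) * norm2 (Λ⁻¹.mulVec y) := by
    rw [norm2_sq, key]
    exact (le_abs_self _).trans (abs_dotProduct_le _ _)
  have h2 : σ * norm2 (Λ⁻¹.mulVec y) ≤ norm2 y := by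
    have := ssv_mul_le Λ (Λ⁻¹.mulVec y)
    rwa [Matrix.mulVec_mulVec, Matrix.mul_nonsing_inv Λ hΛ, Matrix.one_mulVec] at this
  have h3 : norm2 (Λ⁻¹.mulVec y) ≤ norm2 y / σ := by
    rw [le_div_iff₀ hσ]; linarith [h2]
  nlinarith [norm2_nonneg (Λᵀ.mulVec y), norm2_nonneg (Λ⁻¹.mulVec y), mul_le_mul_of_nonneg_left h3 (norm2_nonneg (Λᵀ.mulVec y))]

lemma ssv_pos (hk : k ≠ 0) (hΛ : IsUnit Λ.det) : 0 < smallestSingularValue Λ := by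
  classical
  set S := {r | ∃ x : Fin k → ℝ, norm2 x = 1 ∧ r = norm2 (Λ.mulVec x)} with hS
  have hinj : ∀ x : Fin k → ℝ, Λ.mulVec x = 0 → x = 0 := by
    intro x hx
    have : Λ⁻¹.mulVec (Λ.mulVec x) = x := by
      rw [Matrix.mulVec_mulVec, Matrix.nonsing_inv_mul Λ hΛ, Matrix.one_mulVec]
    rw [← this, hx, Matrix.mulVec_zero]
  have hposS : ∀ r ∈ S, 0 < r := by
    rintro r ⟨x, hx1, rfl⟩
    rcases eq_or_ne (norm2 (Λ.mulVec x)) 0 with h0 | h0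
    · exfalso
      have := hinj x (norm2_eq_zero h0)
      rw [this] at hx1
      simp [norm2] at hx1
    · exact lt_of_le_of_ne (norm2_nonneg _) (Ne.symm h0)
  -- S is the image of the unit sphere in EuclideanSpace under a continuous map
  set e := WithLp.equiv 2 (Fin k → ℝ)
  set f : EuclideanSpace ℝ (Fin k) → ℝ := fun y => norm2 (Λ.mulVec (e y)) with hf
  have hcont : Continuous f := by
    have h1 : Continuous fun y : EuclideanSpace ℝ (Fin k) =>
        (e.symm (Λ.mulVec (e y)) : EuclideanSpace ℝ (Fin k)) := by
      have : (fun y : EuclideanSpace ℝ (Fin k) => (e.symm (Λ.mulVec (e y)) : EuclideanSpace ℝ (Fin k)))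
          = ((PiLp.continuousLinearEquiv 2 ℝ (fun _ : Fin k => ℝ)).symm.toContinuousLinearMap.comp
            ((Matrix.mulVecLin Λ).toContinuousLinearMap.comp
              (PiLp.continuousLinearEquiv 2 ℝ (fun _ : Fin k => ℝ)).toContinuousLinearMap)) := by
        rfl
      rw [this]; exact ContinuousLinearMap.continuous _
    have : f = fun y => ‖(e.symm (Λ.mulVec (e y)) : EuclideanSpace ℝ (Fin k))‖ := by
      funext y; exact norm2_eq_norm _
    rw [this]
    exact continuous_norm.comp h1
  have himg : S = f '' (Metric.sphere (0 : EuclideanSpace ℝ (Fin k)) 1) := by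
    ext r
    constructor
    · rintro ⟨x, hx1, rfl⟩
      refine ⟨e.symm x, ?_, by simp [hf]⟩
      rw [mem_sphere_zero_iff_norm, ← norm2_eq_norm, hx1]
    · rintro ⟨y, hy, rfl⟩
      exact ⟨e y, by rw [mem_sphere_zero_iff_norm] at hy; rw [norm2_eq_norm]; exact hy, rfl⟩
  have hne : S.Nonempty := by
    have i0 : Fin k := ⟨0, Nat.pos_of_ne_zero hk⟩
    refine ⟨norm2 (Λ.mulVec (Pi.single i0 1)), Pi.single i0 1, ?_, rfl⟩
    have hsum : (∑ i, (Pi.single i0 1 : Fin k → ℝ) i ^ 2) = 1 := by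
      simp [Pi.single_apply, sq, ite_mul, Finset.sum_ite_eq']
    rw [norm2, hsum, Real.sqrt_one]
  have hcomp : IsCompact S := by
    rw [himg]; exact (isCompact_sphere _ _).image hcont
  have : sInf S ∈ S := hcomp.sInf_mem hne
  exact hposS _ this
end ssv

lemma exp_aux (d : ℝ) (hd : 0 ≤ d) : exp d - 1 ≤ d * (exp d + 1) / 2 := by
  set g : ℝ → ℝ := fun x => x * exp x + x - 2 * exp x + 2 with hg
  have hderiv : ∀ x : ℝ, HasDerivAt g (x * exp x + 1 - exp x) x := by
    intro x
    have h1 : HasDerivAt (fun x : ℝ => x * exp x) (1 * exp x + x * exp x) x :=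
      (hasDerivAt_id x).mul (Real.hasDerivAt_exp x)
    have h2 := ((h1.add (hasDerivAt_id x)).sub ((Real.hasDerivAt_exp x).const_mul 2)).add_const 2
    have e : x * exp x + 1 - exp x = 1 * exp x + x * exp x + 1 - 2 * exp x := by ring
    rw [e]; exact h2
  have hmono : MonotoneOn g (Set.Ici 0) := by
    apply monotoneOn_of_deriv_nonneg (convex_Ici 0)
    · exact (Continuous.continuousOn (by continuity))
    · intro x _
      exact (hderiv x).differentiableAt.differentiableWithinAt
    · intro x hx
      rw [interior_Ici] at hx
      rw [(hderiv x).deriv]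
      have : exp x ≤ 1 + x * exp x := by
        have h := Real.add_one_le_exp (-x)
        have h2 : (1 - x) * exp x ≤ 1 := by
          have := mul_le_mul_of_nonneg_right h (le_of_lt (Real.exp_pos x))
          rw [← Real.exp_add, neg_add_cancel, Real.exp_zero] at this
          nlinarith
        nlinarith
      linarith
  have h0 : g 0 = 0 := by simp [hg]
  have := hmono (Set.self_mem_Ici) (Set.mem_Ici.mpr hd) hd
  rw [h0] at this
  simp only [hg] at this
  linarith

lemma abs_exp_sub_exp_le (a b : ℝ) : |exp a - exp b| ≤ |a - b| * (exp a + exp b) / 2 := by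
  wlog hab : b ≤ a with H
  · have := H b a (le_of_not_ge hab)
    rw [abs_sub_comm, abs_sub_comm b a] at this
    linarith
  have key : exp a - exp b ≤ (a - b) * (exp a + exp b) / 2 := by
    have hd : 0 ≤ a - b := sub_nonneg.mpr hab
    have := exp_aux (a - b) hd
    have hb := Real.exp_pos b
    have hmul := mul_le_mul_of_nonneg_right this hb.le
    have hexp : exp a = exp (a - b) * exp b := by rw [← Real.exp_add, sub_add_cancel]
    nlinarith [Real.exp_pos b]
  have hnn : 0 ≤ exp a - exp b := sub_nonneg.mpr (Real.exp_le_exp.mpr hab)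
  rw [abs_of_nonneg hnn, abs_of_nonneg (sub_nonneg.mpr hab)]
  exact key

section core
variable {Ω : Type*} [MeasurableSpace Ω] (μ : Measure Ω) [IsProbabilityMeasure μ]
  {k : ℕ} (W : Ω → Fin k → ℝ)

lemma dot_meas (hWmeas : Measurable W) (c : Fin k → ℝ) : Measurable (fun ω => c ⬝ᵥ W ω) := by
  unfold dotProduct
  exact Finset.measurable_sum _ fun i _ =>
    (measurable_const.mul ((measurable_pi_apply i).comp hWmeas))

/-- integrability of `(c ⬝ᵥ W) * exp (θ ⬝ᵥ W)` -/
lemma int_lin_exp (hWmeas : Measurable W)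
    (hmgf : ∀ θ : Fin k → ℝ, Integrable (fun ω => Real.exp (θ ⬝ᵥ W ω)) μ) (c θ : Fin k → ℝ) :
    Integrable (fun ω => (c ⬝ᵥ W ω) * Real.exp (θ ⬝ᵥ W ω)) μ := by
  apply Integrable.mono' ((hmgf (θ + c)).add (hmgf (θ - c)))
  · exact ((dot_meas W hWmeas c).mul
      (((dot_meas W hWmeas θ)).exp)).aestronglyMeasurable
  · refine Filter.Eventually.of_forall fun ω => ?_
    have h1 : |c ⬝ᵥ W ω| ≤ Real.exp (c ⬝ᵥ W ω) + Real.exp (-(c ⬝ᵥ W ω)) := by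
      rcases abs_cases (c ⬝ᵥ W ω) with ⟨h, _⟩ | ⟨h, _⟩ <;> rw [h] <;>
        nlinarith [Real.add_one_le_exp (c ⬝ᵥ W ω), Real.add_one_le_exp (-(c ⬝ᵥ W ω)),
          Real.exp_pos (c ⬝ᵥ W ω), Real.exp_pos (-(c ⬝ᵥ W ω))]
    have h2 : ‖(c ⬝ᵥ W ω) * Real.exp (θ ⬝ᵥ W ω)‖
        = |c ⬝ᵥ W ω| * Real.exp (θ ⬝ᵥ W ω) := by
      rw [norm_mul, Real.norm_eq_abs, Real.norm_eq_abs, abs_exp]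
    rw [h2]
    show _ ≤ Real.exp ((θ + c) ⬝ᵥ W ω) + Real.exp ((θ - c) ⬝ᵥ W ω)
    rw [add_dotProduct, sub_dotProduct, Real.exp_add, Real.exp_sub]
    have h3 := Real.exp_pos (θ ⬝ᵥ W ω)
    have h4 := Real.exp_pos (c ⬝ᵥ W ω)
    rw [Real.exp_neg] at h1
    calc |c ⬝ᵥ W ω| * Real.exp (θ ⬝ᵥ W ω)
        ≤ (Real.exp (c ⬝ᵥ W ω) + (Real.exp (c ⬝ᵥ W ω))⁻¹) * Real.exp (θ ⬝ᵥ W ω) :=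
          mul_le_mul_of_nonneg_right h1 h3.le
      _ = Real.exp (θ ⬝ᵥ W ω) * Real.exp (c ⬝ᵥ W ω)
          + Real.exp (θ ⬝ᵥ W ω) / Real.exp (c ⬝ᵥ W ω) := by ring
end core

section core2
variable {Ω : Type*} [MeasurableSpace Ω] (μ : Measure Ω) [IsProbabilityMeasure μ]
  {k : ℕ} (W : Ω → Fin k → ℝ)

/-- integrability of `|X| * exp (s * X)` where `X = v ⬝ᵥ W`. -/
lemma int_abs_exp (hWmeas : Measurable W)
    (hmgf : ∀ θ : Fin k → ℝ, Integrable (fun ω => Real.exp (θ ⬝ᵥ W ω)) μ)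
    (v : Fin k → ℝ) (s : ℝ) :
    Integrable (fun ω => |v ⬝ᵥ W ω| * Real.exp (s * (v ⬝ᵥ W ω))) μ := by
  have h := (int_lin_exp μ W hWmeas hmgf v (s • v)).abs
  apply h.congr
  refine Filter.Eventually.of_forall fun ω => ?_
  simp only [smul_dotProduct, smul_eq_mul, abs_mul, Real.abs_exp]

lemma int_lin_exp_smul (hWmeas : Measurable W)
    (hmgf : ∀ θ : Fin k → ℝ, Integrable (fun ω => Real.exp (θ ⬝ᵥ W ω)) μ)
    (c v : Fin k → ℝ) (s : ℝ) :
    Integrable (fun ω => (c ⬝ᵥ W ω) * Real.exp (s * (v ⬝ᵥ W ω))) μ := by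
  have h := int_lin_exp μ W hWmeas hmgf c (s • v)
  apply h.congr
  refine Filter.Eventually.of_forall fun ω => ?_
  simp only [smul_dotProduct, smul_eq_mul]

lemma int_exp_smul (hmgf : ∀ θ : Fin k → ℝ, Integrable (fun ω => Real.exp (θ ⬝ᵥ W ω)) μ)
    (v : Fin k → ℝ) (s : ℝ) :
    Integrable (fun ω => Real.exp (s * (v ⬝ᵥ W ω))) μ := by
  have h := hmgf (s • v)
  apply h.congr
  refine Filter.Eventually.of_forall fun ω => ?_
  simp only [smul_dotProduct, smul_eq_mul]

/-- Differentiation under the integral sign for the mgf along direction `v`. -/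
lemma mgf_hasDerivAt (hWmeas : Measurable W)
    (hmgf : ∀ θ : Fin k → ℝ, Integrable (fun ω => Real.exp (θ ⬝ᵥ W ω)) μ)
    (v : Fin k → ℝ) (t₀ : ℝ) :
    HasDerivAt (fun t => ∫ ω, Real.exp (t * (v ⬝ᵥ W ω)) ∂μ)
      (∫ ω, (v ⬝ᵥ W ω) * Real.exp (t₀ * (v ⬝ᵥ W ω)) ∂μ) t₀ := by
  set X : Ω → ℝ := fun ω => v ⬝ᵥ W ω with hX
  have hXmeas : Measurable X := dot_meas W hWmeas v
  set bound : Ω → ℝ := fun ω =>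
    |X ω| * Real.exp ((t₀ + 1) * X ω) + |X ω| * Real.exp ((t₀ - 1) * X ω) with hbound
  have key := hasDerivAt_integral_of_dominated_loc_of_lip (F := fun t ω => Real.exp (t * X ω))
    (F' := fun ω => X ω * Real.exp (t₀ * X ω)) (bound := bound) (μ := μ) (x₀ := t₀)
    (Metric.ball_mem_nhds t₀ one_pos)
    (Filter.Eventually.of_forall fun t =>
      ((measurable_const.mul hXmeas).exp).aestronglyMeasurable)
    (int_exp_smul μ W hmgf v t₀)
    ((hXmeas.mul ((measurable_const.mul hXmeas).exp)).aestronglyMeasurable)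
    ?_ ?_ ?_
  · exact key.2
  · refine Filter.Eventually.of_forall fun ω => ?_
    apply Convex.lipschitzOnWith_of_nnnorm_hasDerivWithin_le
      (f' := fun t => X ω * Real.exp (t * X ω)) (convex_ball t₀ 1)
    · intro t _
      have h1 : HasDerivAt (fun t : ℝ => t * X ω) (X ω) t := by
        simpa using (hasDerivAt_id t).mul_const (X ω)
      exact (h1.exp.congr_deriv (by ring)).hasDerivWithinAt
    · intro t ht
      rw [← NNReal.coe_le_coe, coe_nnnorm, Real.coe_nnabs, Real.norm_eq_abs]
      rw [Metric.mem_ball, Real.dist_eq] at ht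
      have hexp : Real.exp (t * X ω) ≤
          Real.exp ((t₀ + 1) * X ω) + Real.exp ((t₀ - 1) * X ω) := by
        rcases le_or_gt 0 (X ω) with hx | hx
        · have : t * X ω ≤ (t₀ + 1) * X ω := by nlinarith [abs_lt.mp ht]
          calc Real.exp (t * X ω) ≤ Real.exp ((t₀ + 1) * X ω) := Real.exp_le_exp.mpr this
            _ ≤ _ := le_add_of_nonneg_right (Real.exp_pos _).le
        · have : t * X ω ≤ (t₀ - 1) * X ω := by nlinarith [abs_lt.mp ht]
          calc Real.exp (t * X ω) ≤ Real.exp ((t₀ - 1) * X ω) := Real.exp_le_exp.mpr this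
            _ ≤ _ := le_add_of_nonneg_left (Real.exp_pos _).le
      have hb : 0 ≤ bound ω := by positivity
      rw [abs_of_nonneg hb, abs_mul, Real.abs_exp]
      calc |X ω| * Real.exp (t * X ω)
          ≤ |X ω| * (Real.exp ((t₀ + 1) * X ω) + Real.exp ((t₀ - 1) * X ω)) :=
            mul_le_mul_of_nonneg_left hexp (abs_nonneg _)
        _ = bound ω := by rw [hbound]; ring
  · exact (int_abs_exp μ W hWmeas hmgf v (t₀ + 1)).add (int_abs_exp μ W hWmeas hmgf v (t₀ - 1))
  · refine Filter.Eventually.of_forall fun ω => ?_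
    have h1 : HasDerivAt (fun t : ℝ => t * X ω) (X ω) t₀ := by
      simpa using (hasDerivAt_id t₀).mul_const (X ω)
    exact h1.exp.congr_deriv (by ring)
end core2

section core3
variable {Ω : Type*} [MeasurableSpace Ω] {μ : Measure Ω} [IsProbabilityMeasure μ]
  {k : ℕ} {W W' : Ω → Fin k → ℝ}

lemma dot_meas_fn {k : ℕ} (v : Fin k → ℝ) : Measurable (fun x : Fin k → ℝ => v ⬝ᵥ x) := by
  unfold dotProduct
  exact Finset.measurable_sum _ fun i _ => measurable_const.mul (measurable_pi_apply i)

theorem deriv_ineq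
    (hWmeas : Measurable W) (hW'meas : Measurable W')
    (hexch : IdentDistrib (fun ω => (W ω, W' ω)) (fun ω => (W' ω, W ω)) μ μ)
    (Λ : Matrix (Fin k) (Fin k) ℝ) (hΛ : IsUnit Λ.det)
    (hcond : ∀ i, μ[fun ω => W' ω i | MeasurableSpace.comap W inferInstance]
      =ᵐ[μ] fun ω => ∑ j, (1 - Λ) i j * W ω j)
    (K : ℝ) (hK : ∀ᵐ ω ∂μ, norm2 (fun i => W ω i - W' ω i) ≤ K)
    (hmgf : ∀ θ : Fin k → ℝ, Integrable (fun ω => Real.exp (θ ⬝ᵥ W ω) ) μ)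
    (v : Fin k → ℝ) (t : ℝ) (ht : 0 ≤ t) :
    ∫ ω, (v ⬝ᵥ W ω) * Real.exp (t * (v ⬝ᵥ W ω)) ∂μ
      ≤ (norm2 ((Λᵀ)⁻¹.mulVec v) * norm2 v * K ^ 2) * t
        * ∫ ω, Real.exp (t * (v ⬝ᵥ W ω)) ∂μ := by
  classical
  set u : Fin k → ℝ := (Λᵀ)⁻¹.mulVec v with hu
  set c : ℝ := norm2 u * norm2 v * K ^ 2 with hc
  set X : Ω → ℝ := fun ω => v ⬝ᵥ W ω with hX
  set X' : Ω → ℝ := fun ω => v ⬝ᵥ W' ω with hX'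
  set g : Ω → ℝ := fun ω => Real.exp (t * X ω) with hg
  set g' : Ω → ℝ := fun ω => Real.exp (t * X' ω) with hg'
  have hK0 : 0 ≤ K := by
    haveI : (ae μ).NeBot := ae_neBot.mpr (IsProbabilityMeasure.ne_zero μ)
    obtain ⟨ω, hω⟩ := hK.exists
    exact le_trans (norm2_nonneg _) hω
  have hXmeas : Measurable X := dot_meas W hWmeas v
  have hX'meas : Measurable X' := dot_meas W' hW'meas v
  have hgmeas : Measurable g := (measurable_const.mul hXmeas).exp
  have hg'meas : Measurable g' := (measurable_const.mul hX'meas).exp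
  have hgpos : ∀ ω, 0 < g ω := fun ω => Real.exp_pos _
  -- identical distribution of W and W'
  have hWW' : IdentDistrib W W' μ μ := by
    have h := hexch.comp (u := Prod.fst) measurable_fst
    exact h
  have hgg' : IdentDistrib g g' μ μ := by
    have h := hWW'.comp (u := fun x : Fin k → ℝ => Real.exp (t * (v ⬝ᵥ x)))
      ((measurable_const.mul (dot_meas_fn v)).exp)
    exact h
  -- integrability facts
  have hint_g : Integrable g μ := int_exp_smul μ W hmgf v t
  have hint_g' : Integrable g' μ := hgg'.integrable_iff.mp hint_g
  have hIgg' : ∫ ω, g' ω ∂μ = ∫ ω, g ω ∂μ := hgg'.integral_eq.symm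
  have hint_coord_g : ∀ i : Fin k, Integrable (fun ω => W ω i * g ω) μ := by
    intro i
    have h := int_lin_exp_smul μ W hWmeas hmgf (Pi.single i 1) v t
    apply h.congr
    refine Filter.Eventually.of_forall fun ω => ?_
    simp only [single_dotProduct, one_mul, hg, hX]
  have hint_coord : ∀ i : Fin k, Integrable (fun ω => W ω i) μ := by
    intro i
    have h := int_lin_exp μ W hWmeas hmgf (Pi.single i 1) 0
    apply h.congr
    refine Filter.Eventually.of_forall fun ω => ?_
    simp only [single_dotProduct, one_mul, zero_dotProduct, Real.exp_zero, mul_one]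
  have habs' : ∀ᵐ ω ∂μ, ∀ i, |W' ω i| ≤ |W ω i| + K := by
    filter_upwards [hK] with ω hω i
    have h2 := abs_coord_le_norm2 (fun j => W ω j - W' ω j) i
    have h4 : |W ω i - W' ω i| ≤ K := le_trans h2 hω
    have h5 := abs_sub_abs_le_abs_sub (W' ω i) (W ω i)
    rw [abs_sub_comm] at h5
    linarith
  have hint_coord'_g : ∀ i : Fin k, Integrable (fun ω => W' ω i * g ω) μ := by
    intro i
    apply Integrable.mono' ((hint_coord_g i).abs.add (hint_g.const_mul K))
    · exact (((measurable_pi_apply i).comp hW'meas).mul hgmeas).aestronglyMeasurable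
    · filter_upwards [habs'] with ω hω
      have h1 := hω i
      rw [Real.norm_eq_abs, abs_mul, abs_of_pos (hgpos ω)]
      simp only [Pi.add_apply, abs_mul, abs_of_pos (hgpos ω)]
      calc |W' ω i| * g ω ≤ (|W ω i| + K) * g ω :=
            mul_le_mul_of_nonneg_right h1 (hgpos ω).le
        _ = |W ω i| * g ω + K * g ω := by ring
  have hint_coord' : ∀ i : Fin k, Integrable (fun ω => W' ω i) μ := by
    intro i
    apply Integrable.mono' ((hint_coord i).abs.add (integrable_const K))
    · exact ((measurable_pi_apply i).comp hW'meas).aestronglyMeasurable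
    · filter_upwards [habs'] with ω hω
      simpa using hω i
  have hint_diff_g : ∀ i : Fin k, Integrable (fun ω => (W ω i - W' ω i) * g ω) μ := by
    intro i
    apply ((hint_coord_g i).sub (hint_coord'_g i)).congr
    refine Filter.Eventually.of_forall fun ω => ?_
    simp only [Pi.sub_apply]
    ring
  -- strong measurability of g wrt the comap σ-algebra
  have hmle : MeasurableSpace.comap W MeasurableSpace.pi ≤ ‹MeasurableSpace Ω› :=
    hWmeas.comap_le
  have hgsm : StronglyMeasurable[MeasurableSpace.comap W MeasurableSpace.pi] g := by
    apply Measurable.stronglyMeasurable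
    intro s hs
    exact ⟨(fun x : Fin k → ℝ => Real.exp (t * (v ⬝ᵥ x))) ⁻¹' s,
      (measurable_const.mul (dot_meas_fn v)).exp hs, rfl⟩
  -- conditional expectation identity per coordinate
  have hint_sum_g : ∀ i : Fin k,
      Integrable (fun ω => (∑ j, (1 - Λ) i j * W ω j) * g ω) μ := by
    intro i
    have h := int_lin_exp_smul μ W hWmeas hmgf ((1 - Λ) i) v t
    apply h.congr
    exact Filter.Eventually.of_forall fun ω => rfl
  have hcoord : ∀ i : Fin k,
      ∫ ω, W' ω i * g ω ∂μ = ∫ ω, (∑ j, (1 - Λ) i j * W ω j) * g ω ∂μ := by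
    intro i
    have hint_gW' : Integrable (g * fun ω => W' ω i) μ := by
      apply (hint_coord'_g i).congr
      exact Filter.Eventually.of_forall fun ω => by simp [mul_comm]
    have hpull := condExp_mul_of_stronglyMeasurable_left (μ := μ) hgsm hint_gW' (hint_coord' i)
    have h1 : ∫ ω, (g * fun ω => W' ω i) ω ∂μ
        = ∫ ω, (μ[g * fun ω => W' ω i | MeasurableSpace.comap W MeasurableSpace.pi]) ω ∂μ :=
      (integral_condExp hmle).symm
    have h2 : ∫ ω, (μ[g * fun ω => W' ω i | MeasurableSpace.comap W MeasurableSpace.pi]) ω ∂μ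
        = ∫ ω, g ω * (μ[fun ω => W' ω i | MeasurableSpace.comap W MeasurableSpace.pi]) ω ∂μ :=
      integral_congr_ae (hpull.mono fun ω hω => hω)
    have h3 : ∫ ω, g ω * (μ[fun ω => W' ω i | MeasurableSpace.comap W MeasurableSpace.pi]) ω ∂μ
        = ∫ ω, g ω * (∑ j, (1 - Λ) i j * W ω j) ∂μ := by
      apply integral_congr_ae
      have := hcond i
      filter_upwards [this] with ω hω
      rw [hω]
    calc ∫ ω, W' ω i * g ω ∂μ = ∫ ω, (g * fun ω => W' ω i) ω ∂μ := by
          apply integral_congr_ae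
          exact Filter.Eventually.of_forall fun ω => by simp [mul_comm]
      _ = ∫ ω, g ω * (∑ j, (1 - Λ) i j * W ω j) ∂μ := by rw [h1, h2, h3]
      _ = ∫ ω, (∑ j, (1 - Λ) i j * W ω j) * g ω ∂μ := by
          apply integral_congr_ae
          exact Filter.Eventually.of_forall fun ω => by simp [mul_comm]
  -- algebraic identities
  have hΛT : IsUnit Λᵀ.det := by rwa [Matrix.det_transpose]
  have hv : Λᵀ.mulVec u = v := by
    rw [hu, Matrix.mulVec_mulVec, Matrix.mul_nonsing_inv _ hΛT, Matrix.one_mulVec]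
  have hXeq : ∀ ω, X ω = u ⬝ᵥ (Λ.mulVec (W ω)) := by
    intro ω
    rw [hX]
    simp only
    conv_lhs => rw [← hv]
    rw [Matrix.mulVec_transpose, ← Matrix.dotProduct_mulVec]
  have halg : ∀ ω (i : Fin k), (∑ j, (1 - Λ) i j * W ω j) = W ω i - Λ.mulVec (W ω) i := by
    intro ω i
    simp only [Matrix.sub_apply, Matrix.one_apply, sub_mul, ite_mul, one_mul, zero_mul,
      Finset.sum_sub_distrib, Finset.sum_ite_eq, Finset.mem_univ, if_true]
    rfl
  have hint_mulvec_g : ∀ i : Fin k, Integrable (fun ω => Λ.mulVec (W ω) i * g ω) μ := by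
    intro i
    have h := int_lin_exp_smul μ W hWmeas hmgf (Λ i) v t
    apply h.congr
    exact Filter.Eventually.of_forall fun ω => rfl
  -- coordinatewise: ∫ (ΛW)_i g = ∫ (W_i - W'_i) g
  have hcoordΛ : ∀ i : Fin k,
      ∫ ω, Λ.mulVec (W ω) i * g ω ∂μ = ∫ ω, (W ω i - W' ω i) * g ω ∂μ := by
    intro i
    have e1 : ∀ ω, Λ.mulVec (W ω) i * g ω
        = W ω i * g ω - (∑ j, (1 - Λ) i j * W ω j) * g ω := by
      intro ω; rw [halg]; ring
    rw [integral_congr_ae (Filter.Eventually.of_forall e1),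
      integral_sub (hint_coord_g i) (hint_sum_g i), ← hcoord i,
      ← integral_sub (hint_coord_g i) (hint_coord'_g i)]
    apply integral_congr_ae
    exact Filter.Eventually.of_forall fun ω => by ring
  -- main identity : ∫ X g = ∫ (u ⬝ᵥ (W - W')) g
  have hA : ∫ ω, X ω * g ω ∂μ = ∫ ω, (u ⬝ᵥ fun i => W ω i - W' ω i) * g ω ∂μ := by
    have l1 : ∀ ω, X ω * g ω = ∑ i, u i * (Λ.mulVec (W ω) i * g ω) := by
      intro ω
      rw [hXeq ω, dotProduct, Finset.sum_mul]
      exact Finset.sum_congr rfl fun i _ => by ring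
    have l2 : ∀ ω, (u ⬝ᵥ fun i => W ω i - W' ω i) * g ω
        = ∑ i, u i * ((W ω i - W' ω i) * g ω) := by
      intro ω
      rw [dotProduct, Finset.sum_mul]
      exact Finset.sum_congr rfl fun i _ => by ring
    rw [integral_congr_ae (Filter.Eventually.of_forall l1),
      integral_congr_ae (Filter.Eventually.of_forall l2),
      integral_finset_sum _ (fun i _ => (hint_mulvec_g i).const_mul (u i)),
      integral_finset_sum _ (fun i _ => ((hint_diff_g i)).const_mul (u i))]
    refine Finset.sum_congr rfl fun i _ => ?_
    rw [integral_const_mul, integral_const_mul, hcoordΛ i]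
  -- exchangeability step
  have hFmeas : Measurable (fun p : (Fin k → ℝ) × (Fin k → ℝ) =>
      (u ⬝ᵥ fun i => p.1 i - p.2 i) * Real.exp (t * (v ⬝ᵥ p.1))) := by
    apply Measurable.mul
    · unfold dotProduct
      exact Finset.measurable_sum _ fun i _ => measurable_const.mul
        (((measurable_pi_apply i).comp measurable_fst).sub
         ((measurable_pi_apply i).comp measurable_snd))
    · exact (measurable_const.mul ((dot_meas_fn v).comp measurable_fst)).exp
  have hexchI :
      ∫ ω, (u ⬝ᵥ fun i => W ω i - W' ω i) * g ω ∂μ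
        = ∫ ω, (u ⬝ᵥ fun i => W' ω i - W ω i) * g' ω ∂μ := by
    have h := (hexch.comp (u := fun p : (Fin k → ℝ) × (Fin k → ℝ) =>
      (u ⬝ᵥ fun i => p.1 i - p.2 i) * Real.exp (t * (v ⬝ᵥ p.1))) hFmeas).integral_eq
    exact h
  -- integrability of (u ⬝ᵥ Δ) * g and (u ⬝ᵥ Δ) * g'
  have hdotbound : ∀ᵐ ω ∂μ, |u ⬝ᵥ fun i => W ω i - W' ω i| ≤ norm2 u * K := by
    filter_upwards [hK] with ω hω
    calc |u ⬝ᵥ fun i => W ω i - W' ω i| ≤ norm2 u * norm2 (fun i => W ω i - W' ω i) :=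
          abs_dotProduct_le _ _
      _ ≤ norm2 u * K := mul_le_mul_of_nonneg_left hω (norm2_nonneg u)
  have hudotmeas : Measurable (fun ω => u ⬝ᵥ fun i => W ω i - W' ω i) := by
    unfold dotProduct
    exact Finset.measurable_sum _ fun i _ => measurable_const.mul
      (((measurable_pi_apply i).comp hWmeas).sub ((measurable_pi_apply i).comp hW'meas))
  have hint_ug : Integrable (fun ω => (u ⬝ᵥ fun i => W ω i - W' ω i) * g ω) μ := by
    apply Integrable.mono' (hint_g.const_mul (norm2 u * K))
    · exact (hudotmeas.mul hgmeas).aestronglyMeasurable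
    · filter_upwards [hdotbound] with ω hω
      rw [Real.norm_eq_abs, abs_mul, abs_of_pos (hgpos ω)]
      exact mul_le_mul_of_nonneg_right hω (hgpos ω).le
  have hint_ug' : Integrable (fun ω => (u ⬝ᵥ fun i => W ω i - W' ω i) * g' ω) μ := by
    apply Integrable.mono' (hint_g'.const_mul (norm2 u * K))
    · exact (hudotmeas.mul hg'meas).aestronglyMeasurable
    · filter_upwards [hdotbound] with ω hω
      rw [Real.norm_eq_abs, abs_mul, abs_of_pos (Real.exp_pos _)]
      exact mul_le_mul_of_nonneg_right hω (Real.exp_pos _).le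
  -- symmetrized identity
  have hsym : ∫ ω, X ω * g ω ∂μ
      = (∫ ω, (u ⬝ᵥ fun i => W ω i - W' ω i) * (g ω - g' ω) ∂μ) / 2 := by
    have hneg : ∫ ω, (u ⬝ᵥ fun i => W' ω i - W ω i) * g' ω ∂μ
        = - ∫ ω, (u ⬝ᵥ fun i => W ω i - W' ω i) * g' ω ∂μ := by
      rw [← integral_neg]
      apply integral_congr_ae
      refine Filter.Eventually.of_forall fun ω => ?_
      show (u ⬝ᵥ fun i => W' ω i - W ω i) * g' ω = -((u ⬝ᵥ fun i => W ω i - W' ω i) * g' ω)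
      have e : (u ⬝ᵥ fun i => W' ω i - W ω i) = -(u ⬝ᵥ fun i => W ω i - W' ω i) := by
        show u ⬝ᵥ (W' ω - W ω) = -(u ⬝ᵥ (W ω - W' ω))
        rw [dotProduct_sub, dotProduct_sub]
        ring
      rw [e]; ring
    have hsub : ∫ ω, (u ⬝ᵥ fun i => W ω i - W' ω i) * (g ω - g' ω) ∂μ
        = (∫ ω, (u ⬝ᵥ fun i => W ω i - W' ω i) * g ω ∂μ)
          - ∫ ω, (u ⬝ᵥ fun i => W ω i - W' ω i) * g' ω ∂μ := by
      rw [← integral_sub hint_ug hint_ug']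
      apply integral_congr_ae
      exact Filter.Eventually.of_forall fun ω => by ring
    rw [hA, hsub]
    have h := hexchI
    rw [hneg] at h
    linarith [h]
  -- final pointwise bound
  have hptw : ∀ᵐ ω ∂μ, (u ⬝ᵥ fun i => W ω i - W' ω i) * (g ω - g' ω)
      ≤ (norm2 u * K) * (t * (norm2 v * K)) * ((g ω + g' ω) / 2) := by
    filter_upwards [hdotbound, hK] with ω h1 h2
    have h3 : |g ω - g' ω| ≤ |t * X ω - t * X' ω| * (g ω + g' ω) / 2 :=
      abs_exp_sub_exp_le (t * X ω) (t * X' ω)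
    have h4 : |t * X ω - t * X' ω| ≤ t * (norm2 v * K) := by
      have h5 : X ω - X' ω = v ⬝ᵥ fun i => W ω i - W' ω i := by
        rw [hX, hX']
        simp only
        rw [← dotProduct_sub]
        congr 1
      have h6 : |X ω - X' ω| ≤ norm2 v * K := by
        rw [h5]
        calc |v ⬝ᵥ fun i => W ω i - W' ω i| ≤ norm2 v * norm2 (fun i => W ω i - W' ω i) :=
              abs_dotProduct_le _ _
          _ ≤ norm2 v * K := mul_le_mul_of_nonneg_left h2 (norm2_nonneg v)
      calc |t * X ω - t * X' ω| = t * |X ω - X' ω| := by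
            rw [← mul_sub, abs_mul, abs_of_nonneg ht]
        _ ≤ t * (norm2 v * K) := mul_le_mul_of_nonneg_left h6 ht
    have hgg : 0 ≤ g ω + g' ω := by positivity
    calc (u ⬝ᵥ fun i => W ω i - W' ω i) * (g ω - g' ω)
        ≤ |(u ⬝ᵥ fun i => W ω i - W' ω i) * (g ω - g' ω)| := le_abs_self _
      _ = |u ⬝ᵥ fun i => W ω i - W' ω i| * |g ω - g' ω| := abs_mul _ _
      _ ≤ (norm2 u * K) * (|t * X ω - t * X' ω| * (g ω + g' ω) / 2) :=
          mul_le_mul h1 h3 (abs_nonneg _) (mul_nonneg (norm2_nonneg u) hK0)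
      _ ≤ (norm2 u * K) * (t * (norm2 v * K)) * ((g ω + g' ω) / 2) := by
          have h7 : 0 ≤ (g ω + g' ω) / 2 := by linarith
          have h8 := mul_le_mul_of_nonneg_right h4 h7
          have h9 := mul_le_mul_of_nonneg_left h8 (mul_nonneg (norm2_nonneg u) hK0)
          calc (norm2 u * K) * (|t * X ω - t * X' ω| * (g ω + g' ω) / 2)
              = (norm2 u * K) * (|t * X ω - t * X' ω| * ((g ω + g' ω) / 2)) := by ring
            _ ≤ (norm2 u * K) * ((t * (norm2 v * K)) * ((g ω + g' ω) / 2)) := h9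
            _ = (norm2 u * K) * (t * (norm2 v * K)) * ((g ω + g' ω) / 2) := by ring
  -- integrate the bound
  have hint_rhs : Integrable
      (fun ω => (norm2 u * K) * (t * (norm2 v * K)) * ((g ω + g' ω) / 2)) μ := by
    apply Integrable.const_mul
    exact (hint_g.add hint_g').div_const 2
  have hint_lhs : Integrable
      (fun ω => (u ⬝ᵥ fun i => W ω i - W' ω i) * (g ω - g' ω)) μ := by
    apply (hint_ug.sub hint_ug').congr
    refine Filter.Eventually.of_forall fun ω => ?_
    simp only [Pi.sub_apply]
    ring
  have hImono := integral_mono_ae hint_lhs hint_rhs hptw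
  have hIrhs : ∫ ω, (norm2 u * K) * (t * (norm2 v * K)) * ((g ω + g' ω) / 2) ∂μ
      = c * t * ∫ ω, g ω ∂μ := by
    rw [integral_const_mul]
    rw [integral_div, integral_add hint_g hint_g', hIgg']
    rw [hc]
    ring
  have hgnn : 0 ≤ ∫ ω, g ω ∂μ := integral_nonneg fun ω => (hgpos ω).le
  have hctnn : 0 ≤ c * t := by
    apply mul_nonneg _ ht
    rw [hc]
    have := norm2_nonneg u
    have := norm2_nonneg v
    positivity
  calc ∫ ω, X ω * g ω ∂μ
      = (∫ ω, (u ⬝ᵥ fun i => W ω i - W' ω i) * (g ω - g' ω) ∂μ) / 2 := hsym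
    _ ≤ (c * t * ∫ ω, g ω ∂μ) / 2 := by
        rw [← hIrhs]
        linarith [hImono]
    _ ≤ c * t * ∫ ω, g ω ∂μ := by
        have : 0 ≤ c * t * ∫ ω, g ω ∂μ := mul_nonneg hctnn hgnn
        linarith
end core3

section core4
variable {Ω : Type*} [MeasurableSpace Ω] {μ : Measure Ω} [IsProbabilityMeasure μ]
  {k : ℕ} {W W' : Ω → Fin k → ℝ}

theorem mgf_le
    (hWmeas : Measurable W) (hW'meas : Measurable W')
    (hexch : IdentDistrib (fun ω => (W ω, W' ω)) (fun ω => (W' ω, W ω)) μ μ)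
    (Λ : Matrix (Fin k) (Fin k) ℝ) (hΛ : IsUnit Λ.det)
    (hcond : ∀ i, μ[fun ω => W' ω i | MeasurableSpace.comap W inferInstance]
      =ᵐ[μ] fun ω => ∑ j, (1 - Λ) i j * W ω j)
    (K : ℝ) (hK : ∀ᵐ ω ∂μ, norm2 (fun i => W ω i - W' ω i) ≤ K)
    (hmgf : ∀ θ : Fin k → ℝ, Integrable (fun ω => Real.exp (θ ⬝ᵥ W ω) ) μ)
    (v : Fin k → ℝ) (t : ℝ) (ht : 0 ≤ t) :
    ∫ ω, Real.exp (t * (v ⬝ᵥ W ω)) ∂μ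
      ≤ Real.exp ((norm2 ((Λᵀ)⁻¹.mulVec v) * norm2 v * K ^ 2) * t ^ 2 / 2) := by
  set c : ℝ := norm2 ((Λᵀ)⁻¹.mulVec v) * norm2 v * K ^ 2 with hc
  set φ : ℝ → ℝ := fun s => ∫ ω, Real.exp (s * (v ⬝ᵥ W ω)) ∂μ with hφ
  have hφd : ∀ s, HasDerivAt φ (∫ ω, (v ⬝ᵥ W ω) * Real.exp (s * (v ⬝ᵥ W ω)) ∂μ) s :=
    fun s => mgf_hasDerivAt μ W hWmeas hmgf v s
  set ψ : ℝ → ℝ := fun s => φ s * Real.exp (-(c/2) * s^2) with hψ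
  have hψd : ∀ s, HasDerivAt ψ
      ((∫ ω, (v ⬝ᵥ W ω) * Real.exp (s * (v ⬝ᵥ W ω)) ∂μ) * Real.exp (-(c/2)*s^2)
        + φ s * (Real.exp (-(c/2)*s^2) * (-(c/2)*(2*s)))) s := by
    intro s
    have hinner : HasDerivAt (fun s : ℝ => -(c/2) * s^2) (-(c/2)*(2*s)) s := by
      have := (hasDerivAt_pow 2 s).const_mul (-(c/2))
      simpa using this
    exact (hφd s).mul hinner.exp
  have hanti : AntitoneOn ψ (Set.Ici 0) := by
    apply antitoneOn_of_deriv_nonpos (convex_Ici 0)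
    · exact fun s _ => ((hψd s).differentiableAt).continuousAt.continuousWithinAt
    · exact fun s _ => ((hψd s).differentiableAt).differentiableWithinAt
    · intro s hs
      rw [interior_Ici] at hs
      rw [(hψd s).deriv]
      have hd := deriv_ineq hWmeas hW'meas hexch Λ hΛ hcond K hK hmgf v s (le_of_lt hs)
      rw [← hc] at hd
      have hE := Real.exp_pos (-(c/2)*s^2)
      have heq : (∫ ω, (v ⬝ᵥ W ω) * Real.exp (s * (v ⬝ᵥ W ω)) ∂μ) * Real.exp (-(c/2)*s^2)
          + φ s * (Real.exp (-(c/2)*s^2) * (-(c/2)*(2*s)))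
          = Real.exp (-(c/2)*s^2)
            * ((∫ ω, (v ⬝ᵥ W ω) * Real.exp (s * (v ⬝ᵥ W ω)) ∂μ) - c * s * φ s) := by
        ring
      rw [heq]
      exact mul_nonpos_of_nonneg_of_nonpos hE.le (sub_nonpos.mpr hd)
  have hψ0 : ψ 0 = 1 := by
    rw [hψ]
    simp [hφ]
  have h10 : ψ t ≤ 1 := by
    rw [← hψ0]
    exact hanti Set.self_mem_Ici (Set.mem_Ici.mpr ht) ht
  have h10' : φ t * Real.exp (-(c/2)*t^2) ≤ 1 := h10
  have h11 := mul_le_mul_of_nonneg_right h10' (Real.exp_pos ((c/2)*t^2)).le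
  rw [one_mul, mul_assoc, ← Real.exp_add] at h11
  rw [show (-(c/2)*t^2 + (c/2)*t^2) = 0 by ring, Real.exp_zero, mul_one] at h11
  rw [show c*t^2/2 = (c/2)*t^2 by ring]
  exact h11
end core4

lemma norm2_neg {k : ℕ} (x : Fin k → ℝ) : norm2 (-x) = norm2 x := by
  unfold norm2
  congr 1
  exact Finset.sum_congr rfl fun i _ => by simp [neg_sq]

section core5
variable {Ω : Type*} [MeasurableSpace Ω] {μ : Measure Ω} [IsProbabilityMeasure μ]
  {k : ℕ} {W W' : Ω → Fin k → ℝ}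

theorem chernoff_side
    (hWmeas : Measurable W) (hW'meas : Measurable W')
    (hexch : IdentDistrib (fun ω => (W ω, W' ω)) (fun ω => (W' ω, W ω)) μ μ)
    (Λ : Matrix (Fin k) (Fin k) ℝ) (hΛ : IsUnit Λ.det)
    (hcond : ∀ i, μ[fun ω => W' ω i | MeasurableSpace.comap W inferInstance]
      =ᵐ[μ] fun ω => ∑ j, (1 - Λ) i j * W ω j)
    (K : ℝ) (hK : ∀ᵐ ω ∂μ, norm2 (fun i => W ω i - W' ω i) ≤ K)
    (hmgf : ∀ θ : Fin k → ℝ, Integrable (fun ω => Real.exp (θ ⬝ᵥ W ω) ) μ)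
    (hk : k ≠ 0) (hKpos : 0 < K)
    (w v : Fin k → ℝ) (hvw : norm2 v = norm2 w)
    (S : Set Ω) (hsub : S ⊆ {ω | norm2 w ^ 2 ≤ v ⬝ᵥ W ω}) :
    μ S ≤ ENNReal.ofReal
      (Real.exp (-(norm2 w ^ 2 / (2 * K ^ 2 * (1 / smallestSingularValue Λ))))) := by
  set σ := smallestSingularValue Λ with hσ
  have hσpos : 0 < σ := ssv_pos Λ hk hΛ
  set t₀ : ℝ := σ / K ^ 2 with ht₀
  have ht₀nn : 0 ≤ t₀ := by positivity
  set X : Ω → ℝ := fun ω => v ⬝ᵥ W ω with hX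
  set ε : ℝ := norm2 w ^ 2 with hε
  -- Chernoff
  have hcher := measure_ge_le_exp_mul_mgf (X := X) (μ := μ) (t := t₀) ε ht₀nn
    (int_exp_smul μ W hmgf v t₀)
  -- mgf bound
  have hmgfb := mgf_le hWmeas hW'meas hexch Λ hΛ hcond K hK hmgf v t₀ ht₀nn
  have hu : norm2 ((Λᵀ)⁻¹.mulVec v) ≤ norm2 v / σ := by
    have h1 := ssv_transpose_mul_le Λ hΛ ((Λᵀ)⁻¹.mulVec v)
    have hΛT : IsUnit Λᵀ.det := by rwa [Matrix.det_transpose]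
    have h2 : Λᵀ.mulVec ((Λᵀ)⁻¹.mulVec v) = v := by
      rw [Matrix.mulVec_mulVec, Matrix.mul_nonsing_inv _ hΛT, Matrix.one_mulVec]
    rw [h2, ← hσ] at h1
    rw [le_div_iff₀ hσpos]
    linarith
  have hcle : norm2 ((Λᵀ)⁻¹.mulVec v) * norm2 v * K ^ 2 ≤ norm2 w ^ 2 * K ^ 2 / σ := by
    have h3 : norm2 ((Λᵀ)⁻¹.mulVec v) * norm2 v ≤ (norm2 v / σ) * norm2 v :=
      mul_le_mul_of_nonneg_right hu (norm2_nonneg v)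
    have h4 : (norm2 v / σ) * norm2 v = norm2 w ^ 2 / σ := by
      rw [hvw]; ring
    calc norm2 ((Λᵀ)⁻¹.mulVec v) * norm2 v * K ^ 2
        ≤ ((norm2 v / σ) * norm2 v) * K ^ 2 := by nlinarith [sq_nonneg K]
      _ = norm2 w ^ 2 * K ^ 2 / σ := by rw [h4]; ring
  have hmgfb2 : mgf X μ t₀ ≤ Real.exp ((norm2 w ^ 2 * K ^ 2 / σ) * t₀ ^ 2 / 2) := by
    apply le_trans hmgfb
    apply Real.exp_le_exp.mpr
    have ht2 : 0 ≤ t₀ ^ 2 / 2 := by positivity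
    nlinarith [hcle, ht2]
  -- combine
  have hKne : (K : ℝ) ≠ 0 := ne_of_gt hKpos
  have hσne : σ ≠ 0 := ne_of_gt hσpos
  have hfinal : Real.exp (-t₀ * ε) * Real.exp ((norm2 w ^ 2 * K ^ 2 / σ) * t₀ ^ 2 / 2)
      = Real.exp (-(norm2 w ^ 2 / (2 * K ^ 2 * (1 / σ)))) := by
    rw [← Real.exp_add]
    congr 1
    rw [ht₀, hε]
    field_simp
    ring
  have htoReal : (μ S).toReal ≤ Real.exp (-(norm2 w ^ 2 / (2 * K ^ 2 * (1 / σ)))) := by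
    calc (μ S).toReal ≤ (μ {ω | ε ≤ X ω}).toReal :=
          ENNReal.toReal_mono (measure_ne_top μ _) (measure_mono hsub)
      _ ≤ Real.exp (-t₀ * ε) * mgf X μ t₀ := hcher
      _ ≤ Real.exp (-t₀ * ε) * Real.exp ((norm2 w ^ 2 * K ^ 2 / σ) * t₀ ^ 2 / 2) :=
          mul_le_mul_of_nonneg_left hmgfb2 (Real.exp_pos _).le
      _ = _ := hfinal
  calc μ S = ENNReal.ofReal ((μ S).toReal) := (ENNReal.ofReal_toReal (measure_ne_top μ S)).symm
    _ ≤ _ := ENNReal.ofReal_le_ofReal htoReal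
end core5

/-- Multivariate concentration via exchangeable pairs:
`P(W ⪰ w), P(W ⪯ -w) ≤ exp(-‖w‖₂²/(2K²ν₁))` for coordinatewise nonnegative `w`,
where `ν₁ = 1/σ₁(Λ)`. -/
theorem multivariate_concentration
    {Ω : Type*} [MeasurableSpace Ω] (μ : Measure Ω) [IsProbabilityMeasure μ]
    {k : ℕ} (W W' : Ω → Fin k → ℝ)
    (hWmeas : Measurable W) (hW'meas : Measurable W')
    (hexch : IdentDistrib (fun ω => (W ω, W' ω)) (fun ω => (W' ω, W ω)) μ μ)
    (Λ : Matrix (Fin k) (Fin k) ℝ) (hΛ : IsUnit Λ.det)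
    (hcond : ∀ i, μ[fun ω => W' ω i | MeasurableSpace.comap W inferInstance]
      =ᵐ[μ] fun ω => ∑ j, (1 - Λ) i j * W ω j)
    (K : ℝ) (hK : ∀ᵐ ω ∂μ, norm2 (fun i => W ω i - W' ω i) ≤ K)
    (hmgf : ∀ θ : Fin k → ℝ, Integrable (fun ω => Real.exp (θ ⬝ᵥ W ω)) μ)
    (w : Fin k → ℝ) (hw : ∀ i, 0 ≤ w i) :
    μ {ω | ∀ i, w i ≤ W ω i}
        ≤ ENNReal.ofReal
            (Real.exp (-(norm2 w ^ 2 / (2 * K ^ 2 * (1 / smallestSingularValue Λ))))) ∧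
      μ {ω | ∀ i, W ω i ≤ -w i}
        ≤ ENNReal.ofReal
            (Real.exp (-(norm2 w ^ 2 / (2 * K ^ 2 * (1 / smallestSingularValue Λ))))) := by
  rcases eq_or_ne k 0 with hk | hk
  · subst hk
    have hσ : smallestSingularValue Λ = 0 := by
      unfold smallestSingularValue
      have hempty : {r | ∃ x : Fin 0 → ℝ, norm2 x = 1 ∧ r = norm2 (Λ.mulVec x)} = ∅ := by
        ext r
        simp only [Set.mem_setOf_eq, Set.mem_empty_iff_false, iff_false, not_exists]
        rintro x ⟨hx1, -⟩
        have : norm2 x = 0 := by unfold norm2; simp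
        rw [this] at hx1
        exact one_ne_zero hx1.symm
      rw [hempty]
      exact Real.sInf_empty
    rw [hσ]
    rw [show (1 : ℝ)/0 = 0 from div_zero 1, mul_zero, div_zero, neg_zero, Real.exp_zero,
      ENNReal.ofReal_one]
    exact ⟨prob_le_one, prob_le_one⟩
  rcases eq_or_ne K 0 with hK0 | hKne
  · rw [hK0]
    rw [show (2 : ℝ) * 0 ^ 2 * (1 / smallestSingularValue Λ) = 0 by ring, div_zero, neg_zero,
      Real.exp_zero, ENNReal.ofReal_one]
    exact ⟨prob_le_one, prob_le_one⟩
  · have hK0 : 0 ≤ K := by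
      haveI : (ae μ).NeBot := ae_neBot.mpr (IsProbabilityMeasure.ne_zero μ)
      obtain ⟨ω, hω⟩ := hK.exists
      exact le_trans (norm2_nonneg _) hω
    have hKpos : 0 < K := lt_of_le_of_ne hK0 (Ne.symm hKne)
    constructor
    · apply chernoff_side hWmeas hW'meas hexch Λ hΛ hcond K hK hmgf hk hKpos w w rfl
      intro ω hω
      rw [Set.mem_setOf_eq, norm2_sq]
      exact Finset.sum_le_sum fun i _ => mul_le_mul_of_nonneg_left (hω i) (hw i)
    · apply chernoff_side hWmeas hW'meas hexch Λ hΛ hcond K hK hmgf hk hKpos w (-w)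
        (norm2_neg w)
      intro ω hω
      rw [Set.mem_setOf_eq, norm2_sq]
      refine Finset.sum_le_sum fun i _ => ?_
      have h1 := hω i
      have h2 := hw i
      simp only [Pi.neg_apply]
      nlinarith
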